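/- arXiv:1107.2713 — 4 statements merged into one kernel-verified Lean document; each statement's English description precedes it below -/
import Mathlib

section
/- For an N-polycone σ, the monoid σ^∨ ∩ M is a torsion-free, cancellative, finitely generated commutative monoid. -/
open scoped Classical

/-- `σ` is an `N`-polycone: the set of nonnegative real combinations of a
finite subset of the lattice `N`. -/
def IsPolycone {V : Type*} [AddCommGroup V] [Module ℝ V] (N : AddSubgroup V)
    (σ : Set V) : Prop :=
  ∃ s : Finset V, (↑s : Set V) ⊆ (N : Set V) ∧
    σ = {x | ∃ c : V → ℝ, (∀ v, 0 ≤ c v) ∧ x = ∑ v ∈ s, c v • v}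

/-- The dual cone `E^∨ = {u ∈ V* | u(E) ⊆ ℝ≥0}`. -/
def dualCone {V : Type*} [AddCommGroup V] [Module ℝ V] (E : Set V) :
    Set (Module.Dual ℝ V) :=
  {u | ∀ x ∈ E, 0 ≤ u x}

/-- The dual lattice `M = N*`: functionals taking integer values on `N`. -/
def dualLattice {V : Type*} [AddCommGroup V] [Module ℝ V] (N : AddSubgroup V) :
    Set (Module.Dual ℝ V) :=
  {u | ∀ x ∈ N, ∃ k : ℤ, u x = (k : ℝ)}

/-- `τ` is a face of `σ`: `τ = σ ∩ ker u` for some `u ∈ σ^∨ ∩ M`. -/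
def IsFace {V : Type*} [AddCommGroup V] [Module ℝ V] (N : AddSubgroup V)
    (σ τ : Set V) : Prop :=
  ∃ u ∈ dualCone σ ∩ dualLattice N, τ = σ ∩ {x | u x = 0}

/-- `σ` is sharp: it contains no line. -/
def Sharp {V : Type*} [AddCommGroup V] [Module ℝ V] (σ : Set V) : Prop :=
  ∀ x ∈ σ, -x ∈ σ → x = 0

/-- `N` is a ℤ-structure on `V`: a full-rank lattice. -/
def IsZStructure {V : Type*} [AddCommGroup V] [Module ℝ V] (N : AddSubgroup V) : Prop :=
  Submodule.span ℝ (N : Set V) = ⊤ ∧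
    Nonempty (Module.Basis (Fin (Module.finrank ℝ V)) ℤ N)

/-- An `N`-fan: a finite set of sharp `N`-polycones closed under faces, such
that the intersection of two cones is a common face of both. -/
def IsFan {V : Type*} [AddCommGroup V] [Module ℝ V] (N : AddSubgroup V)
    (F : Set (Set V)) : Prop :=
  F.Finite ∧ (∀ σ ∈ F, IsPolycone N σ ∧ Sharp σ) ∧
    (∀ σ ∈ F, ∀ τ, IsFace N σ τ → τ ∈ F) ∧
    (∀ σ ∈ F, ∀ τ ∈ F, IsFace N σ (σ ∩ τ) ∧ IsFace N τ (σ ∩ τ))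

/-- `ρ` is one-dimensional. -/
def IsRay {V : Type*} [AddCommGroup V] [Module ℝ V] (ρ : Set V) : Prop :=
  Module.finrank ℝ (Submodule.span ℝ ρ) = 1

/-- `x` is the minimal `N`-generator of the ray `ρ`. -/
def IsMinGen {V : Type*} [AddCommGroup V] [Module ℝ V] (N : AddSubgroup V)
    (ρ : Set V) (x : V) : Prop :=
  x ∈ N ∧ ρ = {y | ∃ r : ℝ, 0 ≤ r ∧ y = r • x} ∧
    ∀ r : ℝ, 0 < r → r < 1 → r • x ∉ N

/-- Auxiliary embedding used for Gordan's lemma: record the (nonnegative) values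
of `L m` together with positive and negative parts of `m`. -/
private def gordanMap {n k : ℕ} (L : (Fin n → ℤ) →+ (Fin k → ℤ)) (m : Fin n → ℤ) :
    (Fin k ⊕ (Fin n ⊕ Fin n)) → ℕ :=
  Sum.elim (fun j => (L m j).toNat)
    (Sum.elim (fun i => (m i).toNat) (fun i => (-m i).toNat))

private lemma gordanMap_injective {n k : ℕ} (L : (Fin n → ℤ) →+ (Fin k → ℤ)) :
    Function.Injective (gordanMap L) := by
  intro a b h
  funext i
  have h1 := congrFun h (Sum.inr (Sum.inl i))
  have h2 := congrFun h (Sum.inr (Sum.inr i))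
  simp only [gordanMap, Sum.elim_inr, Sum.elim_inl] at h1 h2
  omega

/-- **Gordan's lemma**, combinatorial core: the monoid of integer vectors
satisfying finitely many integral linear inequalities is finitely generated. -/
private lemma gordan {n k : ℕ} (L : (Fin n → ℤ) →+ (Fin k → ℤ))
    (S : AddSubmonoid (Fin n → ℤ)) (hS : ∀ m, m ∈ S ↔ ∀ j, 0 ≤ L m j) : S.FG := by
  classical
  -- difference stays in `S`
  have hsub : ∀ m ∈ S, ∀ m' ∈ S, gordanMap L m ≤ gordanMap L m' → (m' - m) ∈ S := by
    intro m hm m' hm' hle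
    rw [hS] at hm hm' ⊢
    intro j
    have h1 := hle (Sum.inl j)
    simp only [gordanMap, Sum.elim_inl] at h1
    have h2 := hm j
    have h3 := hm' j
    have h4 : L (m' - m) j = L m' j - L m j := by rw [map_sub]; rfl
    omega
  -- per-coordinate norm bookkeeping
  have hcoord : ∀ (m m' : Fin n → ℤ), gordanMap L m ≤ gordanMap L m' → ∀ i,
      ((m' - m) i).natAbs + (m i).natAbs = (m' i).natAbs := by
    intro m m' hle i
    have h1 := hle (Sum.inr (Sum.inl i))
    have h2 := hle (Sum.inr (Sum.inr i))
    simp only [gordanMap, Sum.elim_inr, Sum.elim_inl] at h1 h2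
    simp only [Pi.sub_apply]
    omega
  set Min : Set (Fin n → ℤ) :=
    {m | m ∈ S ∧ m ≠ 0 ∧ ∀ m' ∈ S, m' ≠ 0 → gordanMap L m' ≤ gordanMap L m → m' = m}
    with hMinDef
  have hMinFin : Min.Finite := by
    have hanti : IsAntichain (· ≤ ·) (gordanMap L '' Min) := by
      rintro _ ⟨a, ha, rfl⟩ _ ⟨c, hc, rfl⟩ hne hle
      exact hne (congrArg (gordanMap L) (hc.2.2 a ha.1 ha.2.1 hle))
    have hpwo : (gordanMap L '' Min).IsPWO :=
      (Set.IsPWO.pi (s := fun (_ : Fin k ⊕ (Fin n ⊕ Fin n)) => (Set.univ : Set ℕ))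
        (fun _ => Set.IsPWO.of_linearOrder _)).mono
        (fun x _ => Set.mem_univ_pi.mpr fun _ => Set.mem_univ _)
    have hfin : (gordanMap L '' Min).Finite :=
      hanti.finite_of_partiallyWellOrderedOn hpwo
    exact Set.Finite.of_finite_image hfin ((gordanMap_injective L).injOn)
  -- every nonzero element of `S` dominates a minimal one
  have hexists : ∀ W : ℕ, ∀ m ∈ S, m ≠ 0 → (∑ b, gordanMap L m b) ≤ W →
      ∃ m₀ ∈ Min, gordanMap L m₀ ≤ gordanMap L m := by
    intro W
    induction W with
    | zero =>
      intro m hm hne hW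
      exfalso
      apply hne
      funext i
      have hz : ∀ b, gordanMap L m b = 0 := fun b =>
        Finset.sum_eq_zero_iff.mp (Nat.le_zero.mp hW) b (Finset.mem_univ b)
      have h1 := hz (Sum.inr (Sum.inl i))
      have h2 := hz (Sum.inr (Sum.inr i))
      simp only [gordanMap, Sum.elim_inr, Sum.elim_inl] at h1 h2
      show m i = 0
      omega
    | succ W ih =>
      intro m hm hne hW
      by_cases hmin : ∀ m' ∈ S, m' ≠ 0 → gordanMap L m' ≤ gordanMap L m → m' = m
      · exact ⟨m, ⟨hm, hne, hmin⟩, le_refl _⟩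
      · push_neg at hmin
        obtain ⟨m', hm', hne', hle', hnee⟩ := hmin
        have hneg : gordanMap L m' ≠ gordanMap L m := fun h => hnee (gordanMap_injective L h)
        obtain ⟨bb, hbb⟩ := Function.ne_iff.mp hneg
        have hlt : ∑ b, gordanMap L m' b < ∑ b, gordanMap L m b :=
          Finset.sum_lt_sum (fun b _ => hle' b)
            ⟨bb, Finset.mem_univ bb, lt_of_le_of_ne (hle' bb) hbb⟩
        obtain ⟨m₀, h₀, hle₀⟩ := ih m' hm' hne' (by omega)
        exact ⟨m₀, h₀, hle₀.trans hle'⟩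
  -- generation by induction on the ℓ¹ norm
  have hgen : ∀ W : ℕ, ∀ m ∈ S, (∑ i, (m i).natAbs) ≤ W →
      m ∈ AddSubmonoid.closure Min := by
    intro W
    induction W with
    | zero =>
      intro m hm hW
      have hz : m = 0 := by
        funext i
        have := Finset.sum_eq_zero_iff.mp (Nat.le_zero.mp hW) i (Finset.mem_univ i)
        show m i = 0
        omega
      rw [hz]; exact zero_mem _
    | succ W ih =>
      intro m hm hW
      by_cases h0 : m = 0
      · rw [h0]; exact zero_mem _
      · obtain ⟨m₀, hm₀, hle⟩ := hexists (∑ b, gordanMap L m b) m hm h0 le_rfl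
        have hsm : m - m₀ ∈ S := hsub m₀ hm₀.1 m hm hle
        have hsum : (∑ i, ((m - m₀) i).natAbs) + ∑ i, (m₀ i).natAbs
            = ∑ i, (m i).natAbs := by
          rw [← Finset.sum_add_distrib]
          exact Finset.sum_congr rfl fun i _ => hcoord m₀ m hle i
        have hpos : 0 < ∑ i, (m₀ i).natAbs := by
          obtain ⟨i, hi⟩ := Function.ne_iff.mp hm₀.2.1
          have hi' : 0 < (m₀ i).natAbs := by
            have : m₀ i ≠ 0 := hi
            omega
          exact Finset.sum_pos' (fun _ _ => Nat.zero_le _) ⟨i, Finset.mem_univ i, hi'⟩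
        have hih := ih (m - m₀) hsm (by omega)
        have : m₀ + (m - m₀) ∈ AddSubmonoid.closure Min :=
          add_mem (AddSubmonoid.subset_closure hm₀) hih
        simpa using this
  refine ⟨hMinFin.toFinset, ?_⟩
  rw [Set.Finite.coe_toFinset]
  refine le_antisymm ?_ ?_
  · rw [AddSubmonoid.closure_le]
    intro x hx
    exact hx.1
  · intro m hm
    exact hgen _ m hm le_rfl

/-- `σ^∨ ∩ M` is a torsion-free, cancellative, finitely generated
commutative monoid. -/
theorem dual_monoid_props {V : Type*} [AddCommGroup V] [Module ℝ V]
    [FiniteDimensional ℝ V] (N : AddSubgroup V) (hN : IsZStructure N)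
    (σ : Set V) (hσ : IsPolycone N σ) :
    ∃ P : AddSubmonoid (Module.Dual ℝ V),
      (P : Set (Module.Dual ℝ V)) = dualCone σ ∩ dualLattice N ∧
      P.FG ∧
      (∀ (n : ℕ) (x y : P), 0 < n → n • x = n • y → x = y) ∧
      (∀ a b c : P, a + b = a + c → b = c) := by
  classical
  obtain ⟨hspan, ⟨bN⟩⟩ := hN
  obtain ⟨s, hsN, hσeq⟩ := hσ
  set n := Module.finrank ℝ V with hn
  set e : Fin n → V := fun i => ((bN i : N) : V) with he
  have heN : ∀ i, e i ∈ N := fun i => (bN i).2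
  -- every element of `N` is an integer combination of the `e i`
  have hcomb : ∀ x : N, (x : V) = ∑ i, bN.repr x i • e i := by
    intro x
    conv_lhs => rw [← bN.sum_repr x]
    rw [show ((∑ i, bN.repr x i • bN i : N) : V) = N.subtype (∑ i, bN.repr x i • bN i)
      from rfl, map_sum]
    exact Finset.sum_congr rfl fun i _ => map_zsmul N.subtype _ _
  have hle : ⊤ ≤ Submodule.span ℝ (Set.range e) := by
    rw [← hspan, Submodule.span_le]
    intro x hx
    rw [show x = ((⟨x, hx⟩ : N) : V) from rfl, hcomb ⟨x, hx⟩]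
    refine Submodule.sum_mem _ fun i _ => ?_
    have hei : e i ∈ Submodule.span ℝ (Set.range e) := Submodule.subset_span ⟨i, rfl⟩
    exact zsmul_mem hei _
  have hcard : Fintype.card (Fin n) = Module.finrank ℝ V := by simp [hn]
  set b : Module.Basis (Fin n) ℝ V := basisOfTopLeSpanOfCardEqFinrank e hle hcard with hbdef
  have hb : ∀ i, b i = e i := fun i =>
    congrFun (coe_basisOfTopLeSpanOfCardEqFinrank e hle hcard) i
  -- enumerate the generators of σ
  set es : Fin s.card → V := fun j => ((s.equivFin.symm j : {x // x ∈ s}) : V) with hes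
  have hesmem : ∀ j, es j ∈ s := fun j => (s.equivFin.symm j).2
  set C : Fin s.card → Fin n → ℤ := fun j i => bN.repr ⟨es j, hsN (hesmem j)⟩ i with hC
  set L : (Fin n → ℤ) →+ (Fin s.card → ℤ) :=
    { toFun := fun m j => ∑ i, C j i * m i
      map_zero' := by funext j; simp
      map_add' := by
        intro a c; funext j
        simp [Pi.add_apply, mul_add, Finset.sum_add_distrib] } with hL
  set S : AddSubmonoid (Fin n → ℤ) :=
    { carrier := {m | ∀ j, 0 ≤ L m j}
      zero_mem' := by intro j; rw [map_zero]; exact le_refl _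
      add_mem' := by
        intro a c ha hc j
        rw [map_add]
        exact add_nonneg (ha j) (hc j) } with hSdef
  set Φ : (Fin n → ℤ) →+ Module.Dual ℝ V :=
    { toFun := fun m => ∑ i, (m i : ℝ) • b.coord i
      map_zero' := by simp
      map_add' := by
        intro a c
        simp only [Pi.add_apply, Int.cast_add, add_smul, Finset.sum_add_distrib] } with hΦ
  have hΦb : ∀ (m : Fin n → ℤ) (i : Fin n), Φ m (b i) = (m i : ℝ) := by
    intro m i
    show (∑ j, (m j : ℝ) • b.coord j) (b i) = (m i : ℝ)
    rw [LinearMap.sum_apply]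
    simp [Module.Basis.coord_apply, Module.Basis.repr_self, Finsupp.single_apply,
      Finset.sum_ite_eq]
  -- value of a functional on lattice points, via coordinates
  have hval : ∀ (u : Module.Dual ℝ V) (m : Fin n → ℤ), (∀ i, u (b i) = (m i : ℝ)) →
      ∀ x : N, u x = ((∑ i, bN.repr x i * m i : ℤ) : ℝ) := by
    intro u m hu x
    rw [hcomb x, map_sum]
    push_cast
    refine Finset.sum_congr rfl fun i _ => ?_
    rw [map_zsmul, ← hb i, hu i, zsmul_eq_mul]
    try push_cast
    try ring
  -- the generators lie in σ
  have hgens : ∀ v ∈ s, v ∈ σ := by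
    intro v hv
    rw [hσeq]
    refine ⟨fun w => if w = v then 1 else 0, fun w => by dsimp only; split <;> norm_num, ?_⟩
    show v = ∑ w ∈ s, (if w = v then (1:ℝ) else 0) • w
    symm
    calc ∑ w ∈ s, (if w = v then (1:ℝ) else 0) • w
        = ∑ w ∈ s, (if w = v then w else 0) :=
          Finset.sum_congr rfl fun w _ => by split <;> simp
      _ = v := by simp [Finset.sum_ite_eq', hv]
  -- dual-cone membership in coordinates
  have hdc : ∀ (u : Module.Dual ℝ V) (m : Fin n → ℤ), (∀ i, u (b i) = (m i : ℝ)) →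
      (u ∈ dualCone σ ↔ ∀ j, 0 ≤ L m j) := by
    intro u m hu
    constructor
    · intro h j
      have h1 := h (es j) (hgens _ (hesmem j))
      have h2 := hval u m hu ⟨es j, hsN (hesmem j)⟩
      rw [show ((⟨es j, hsN (hesmem j)⟩ : N) : V) = es j from rfl] at h2
      rw [h2] at h1
      exact_mod_cast h1
    · intro h x hx
      rw [hσeq] at hx
      obtain ⟨c, hc, rfl⟩ := hx
      rw [map_sum]
      refine Finset.sum_nonneg fun v hv => ?_
      rw [map_smul, smul_eq_mul]
      refine mul_nonneg (hc v) ?_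
      set j := s.equivFin ⟨v, hv⟩ with hj
      have hesj : es j = v := by rw [hes]; simp [hj]
      have h2 := hval u m hu ⟨es j, hsN (hesmem j)⟩
      rw [show ((⟨es j, hsN (hesmem j)⟩ : N) : V) = es j from rfl] at h2
      rw [← hesj, h2]
      exact_mod_cast h j
  -- Φ m evaluates L on the generators (needed for S-membership transfer)
  have hLval : ∀ (m : Fin n → ℤ) (j : Fin s.card),
      (L m j : ℝ) = ((∑ i, bN.repr (⟨es j, hsN (hesmem j)⟩ : N) i * m i : ℤ) : ℝ) := by
    intro m j
    show ((∑ i, C j i * m i : ℤ) : ℝ) = _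
    norm_cast
  refine ⟨S.map Φ, ?_, (gordan L S fun m => Iff.rfl).map Φ, ?_, ?_⟩
  · ext u
    simp only [AddSubmonoid.coe_map, Set.mem_image, SetLike.mem_coe, Set.mem_inter_iff]
    constructor
    · rintro ⟨m, hm, rfl⟩
      refine ⟨(hdc (Φ m) m (hΦb m)).mpr hm, ?_⟩
      intro x hx
      exact ⟨∑ i, bN.repr (⟨x, hx⟩ : N) i * m i, hval (Φ m) m (hΦb m) ⟨x, hx⟩⟩
    · rintro ⟨hu1, hu2⟩
      have hch : ∀ i, ∃ z : ℤ, u (b i) = (z : ℝ) := by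
        intro i
        rw [hb i]
        exact hu2 (e i) (heN i)
      choose m hm using hch
      refine ⟨m, (hdc u m hm).mp hu1, ?_⟩
      apply b.ext
      intro i
      rw [hΦb m i, hm i]
  · intro k x y hk hxy
    have h0 : ((k • x : ↥(S.map Φ)) : Module.Dual ℝ V)
        = ((k • y : ↥(S.map Φ)) : Module.Dual ℝ V) := congrArg Subtype.val hxy
    have h1 : (k : ℝ) • (x : Module.Dual ℝ V) = (k : ℝ) • (y : Module.Dual ℝ V) := by
      rw [Nat.cast_smul_eq_nsmul, Nat.cast_smul_eq_nsmul]
      exact_mod_cast h0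
    have h2 : (x : Module.Dual ℝ V) = y :=
      smul_right_injective (Module.Dual ℝ V) (by exact_mod_cast hk.ne') h1
    exact Subtype.ext h2
  · intro a b' c h
    have h1 : (a : Module.Dual ℝ V) + b' = (a : Module.Dual ℝ V) + c := by
      exact_mod_cast congrArg Subtype.val h
    exact Subtype.ext (add_left_cancel h1)
end

section
/- Let R be a commutative ring and P a commutative cancellative torsion-free monoid. The monoid algebra R[P] is reduced if and only if R is reduced. -/
open TensorProduct

set_option maxHeartbeats 1000000 in
/-- A cancellative torsion-free commutative additive monoid has the `UniqueSums` property. -/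
theorem uniqueSums_of_torsionFree (P : Type*) [AddCancelCommMonoid P]
    (htf : ∀ (n : ℕ) (x y : P), 0 < n → n • x = n • y → x = y) :
    UniqueSums P := by
  -- The Grothendieck group of `P`, realized as the localization at the top submonoid.
  let G := AddLocalization (⊤ : AddSubmonoid P)
  have nsmul_mk : ∀ (n : ℕ) (a b : P),
      n • AddLocalization.mk a ⟨b, AddSubmonoid.mem_top b⟩
        = AddLocalization.mk (n • a)
            (⟨n • b, AddSubmonoid.mem_top _⟩ : (⊤ : AddSubmonoid P)) := by
    intro n a b
    induction n with
    | zero => rw [zero_nsmul, zero_nsmul, zero_nsmul]; exact AddLocalization.mk_zero.symm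
    | succ k ih =>
        rw [succ_nsmul, ih, AddLocalization.mk_add]
        congr 1
        · rw [succ_nsmul]
        · exact Subtype.ext (by simp [succ_nsmul])
  -- torsion-freeness of G
  have htorG : ∀ (n : ℕ) (g : G), 0 < n → n • g = 0 → g = 0 := by
    intro n g hn hg
    induction g using AddLocalization.ind with
    | _ y =>
      obtain ⟨a, b⟩ := y
      rw [show b = (⟨(b : P), AddSubmonoid.mem_top _⟩ : (⊤ : AddSubmonoid P)) from rfl, nsmul_mk,
        ← AddLocalization.mk_zero, AddLocalization.mk_eq_mk_iff'] at hg
      simp only [ZeroMemClass.coe_zero, zero_add, add_zero] at hg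
      have hab : a = (b : P) := htf n a b hn hg
      rw [← AddLocalization.mk_zero, AddLocalization.mk_eq_mk_iff']
      simp [hab]
  -- every element of G has an additive inverse
  have hneg : ∀ x : G, ∃ y : G, y + x = 0 := by
    intro x
    induction x using AddLocalization.ind with
    | _ y =>
      obtain ⟨a, b⟩ := y
      refine ⟨AddLocalization.mk (b : P) ⟨a, AddSubmonoid.mem_top _⟩, ?_⟩
      rw [AddLocalization.mk_add, ← AddLocalization.mk_zero,
        AddLocalization.mk_eq_mk_iff']
      push_cast
      simp [add_comm]
  letI : Neg G := ⟨fun x => (hneg x).choose⟩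
  letI gG : AddCommGroup G :=
    { (inferInstance : AddCommMonoid G) with
      neg := fun x => (hneg x).choose
      sub := fun a b => a + (hneg b).choose
      zsmul := zsmulRec
      neg_add_cancel := fun x => (hneg x).choose_spec }
  letI : Module ℤ G := AddCommGroup.toIntModule G
  -- G is torsion-free as a ℤ-module
  have hztor : ∀ (m : ℤ) (g : G), m ≠ 0 → m • g = 0 → g = 0 := by
    intro m g hm hg
    refine htorG m.natAbs g (Int.natAbs_pos.mpr hm) ?_
    rcases le_or_gt 0 m with h | h
    · have h1 : ((m.natAbs : ℤ)) • g = 0 := by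
        rw [show ((m.natAbs : ℤ)) = m by omega, hg]
      rwa [natCast_zsmul] at h1
    · have h1 : ((m.natAbs : ℤ)) • g = 0 := by
        rw [show ((m.natAbs : ℤ)) = -m by omega, neg_smul, hg, neg_zero]
      rwa [natCast_zsmul] at h1
  -- the canonical injection of P into G
  let c : P →ₙ+ G :=
    { toFun := fun p => AddLocalization.mk p 0
      map_add' := fun p q => by rw [AddLocalization.mk_add, add_zero] }
  have hc : Function.Injective c := AddLocalization.mk_left_injective 0
  -- embed G into the ℚ-vector space ℚ ⊗[ℤ] G
  let f : G →ₗ[ℤ] ℚ ⊗[ℤ] G := TensorProduct.mk ℤ ℚ G 1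
  haveI : IsLocalizedModule (nonZeroDivisors ℤ) f :=
    (isLocalizedModule_iff_isBaseChange (nonZeroDivisors ℤ) ℚ f).mpr
      (TensorProduct.isBaseChange ℤ G ℚ)
  have hf : Function.Injective f := by
    intro x y hxy
    have h0 : f (x - y) = 0 := by rw [map_sub, hxy, sub_self]
    obtain ⟨s, hs⟩ := (IsLocalizedModule.eq_zero_iff (nonZeroDivisors ℤ) f).mp h0
    exact sub_eq_zero.mp (hztor (s : ℤ) _ (nonZeroDivisors.coe_ne_zero s) hs)
  exact UniqueSums.of_injective_addHom
    ((f.toAddMonoidHom.toAddHom).comp c) (hf.comp hc)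
    (TwoUniqueSums.toUniqueSums (ℚ ⊗[ℤ] G))

/-- for a cancellative torsion-free commutative monoid `P`,
the monoid algebra `R[P]` is reduced iff `R` is reduced. -/
theorem monoidAlgebra_isReduced_iff (R : Type*) [CommRing R]
    (P : Type*) [AddCommMonoid P] [IsCancelAdd P]
    (htf : ∀ (n : ℕ) (x y : P), 0 < n → n • x = n • y → x = y) :
    IsReduced (AddMonoidAlgebra R P) ↔ IsReduced R := by
  constructor
  · intro h
    exact isReduced_of_injective (AddMonoidAlgebra.singleZeroRingHom (R := R) (M := P))
      (fun a b hab => by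
        have := congrArg (fun f : AddMonoidAlgebra R P => f.coeff 0) hab
        simpa [AddMonoidAlgebra.singleZeroRingHom] using this)
  · intro hR
    letI : AddCancelCommMonoid P :=
      { ‹AddCommMonoid P› with
        add_left_cancel := fun a b c h => add_left_cancel h }
    haveI : UniqueSums P := uniqueSums_of_torsionFree P htf
    constructor
    intro a ha
    obtain ⟨n, hn⟩ := ha
    rcases Nat.eq_zero_or_pos n with rfl | hnpos
    · rw [pow_zero] at hn
      calc a = a * 1 := (mul_one a).symm
        _ = a * 0 := by rw [hn]
        _ = 0 := mul_zero a
    have key : ∀ d : P, a.coeff d ∈ nilradical R := by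
      intro d
      rw [nilradical_eq_sInf]
      refine Ideal.mem_sInf.mpr fun {J} hJ => ?_
      haveI : J.IsPrime := hJ
      let φ : AddMonoidAlgebra R P →ₐ[R] AddMonoidAlgebra (R ⧸ J) P :=
        AddMonoidAlgebra.lift R (AddMonoidAlgebra (R ⧸ J) P) P
          (AddMonoidAlgebra.of (R ⧸ J) P)
      have hφ : ∀ (x : AddMonoidAlgebra R P) (e : P),
          (φ x).coeff e = Ideal.Quotient.mk J (x.coeff e) := by
        intro x
        induction x using AddMonoidAlgebra.induction_linear with
        | zero => intro e; simp
        | add p q hp hq =>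
            intro e
            rw [map_add, AddMonoidAlgebra.coeff_add, AddMonoidAlgebra.coeff_add, Finsupp.add_apply, Finsupp.add_apply, hp, hq, map_add]
        | single d' r =>
            intro e
            rw [AddMonoidAlgebra.lift_single, AddMonoidAlgebra.of_apply,
              toAdd_ofAdd]
            show (r • AddMonoidAlgebra.single d' (1 : R ⧸ J)).coeff e = _
            rw [AddMonoidAlgebra.smul_single, AddMonoidAlgebra.coeff_single, AddMonoidAlgebra.coeff_single]
            rcases eq_or_ne d' e with rfl | hne
            · rw [Finsupp.single_eq_same, Finsupp.single_eq_same,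
                ← Algebra.algebraMap_eq_smul_one, Ideal.Quotient.algebraMap_eq]
            · rw [Finsupp.single_eq_of_ne' hne, Finsupp.single_eq_of_ne' hne, map_zero]
      have h2 : (φ a) ^ n = 0 := by rw [← map_pow, hn, map_zero]
      have h3 : φ a = 0 := (pow_eq_zero_iff hnpos.ne').mp h2
      have h4 : Ideal.Quotient.mk J (a.coeff d) = 0 := by
        rw [← hφ a d, h3]; rfl
      exact Ideal.Quotient.eq_zero_iff_mem.mp h4
    ext d
    have h5 : IsNilpotent (a.coeff d) := mem_nilradical.mp (key d)
    simpa using IsReduced.eq_zero _ h5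
end

section
/- Let S = R[(Z_ρ)_{ρ∈Σ₁}] be the polynomial ring over a commutative ring R graded by A = coker(c) via deg(Z_ρ) = α_ρ, and let I be the ideal generated by the monomials Ẑ_σ = ∏_{ρ∈Σ₁∖σ₁} Z_ρ for σ ∈ Σ. For a subgroup B ⊆ A of finite index, the ideal I_B = I ∩ S_B of the degree-restricted subring S_B = ⊕_{α∈B} S_α is generated by finitely many monomials. -/
open scoped Classical

open scoped Classical

/-- The `A`-degree of a monomial exponent `d`, for the grading with
`deg Z_ρ = α ρ`. -/
noncomputable def monDeg {ι A : Type*} [AddCommGroup A] (α : ι → A)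
    (d : ι →₀ ℕ) : A :=
  d.sum fun ρ k => k • α ρ

theorem monDeg_add {ι A : Type*} [AddCommGroup A] (α : ι → A) (d e : ι →₀ ℕ) :
    monDeg α (d + e) = monDeg α d + monDeg α e := by
  classical
  exact Finsupp.sum_add_index' (fun ρ => zero_smul ℕ (α ρ))
    (fun ρ k l => add_smul k l (α ρ))

/-- The `B`-restricted Cox ring `S_B = ⊕_{α ∈ B} S_α` as a subalgebra of the
polynomial ring `S = R[(Z_ρ)_ρ]`. -/
noncomputable def SB (R : Type*) [CommRing R] {ι A : Type*} [AddCommGroup A]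
    (α : ι → A) (B : AddSubgroup A) : Subalgebra R (MvPolynomial ι R) where
  carrier := {p | ∀ d ∈ p.support, monDeg α d ∈ B}
  add_mem' := by
    intro p q hp hq d hd
    rcases Finset.mem_union.1 (MvPolynomial.support_add hd) with h | h
    · exact hp d h
    · exact hq d h
  mul_mem' := by
    intro p q hp hq d hd
    obtain ⟨a, ha, b, hb, rfl⟩ := Finset.mem_add.1 (MvPolynomial.support_mul p q hd)
    rw [monDeg_add]
    exact B.add_mem (hp a ha) (hq b hb)
  zero_mem' := by
    intro d hd
    simp at hd
  one_mem' := by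
    intro r hd
    have h := MvPolynomial.mem_support_iff.1 hd
    rw [MvPolynomial.coeff_one] at h
    by_cases h0 : r = 0
    · subst h0
      simpa [monDeg] using B.zero_mem
    · simp [eq_comm, h0] at h
  algebraMap_mem' := by
    intro r d hd
    have h := MvPolynomial.mem_support_iff.1 hd
    rw [MvPolynomial.algebraMap_eq, MvPolynomial.coeff_C] at h
    by_cases h0 : d = 0
    · subst h0
      simpa [monDeg] using B.zero_mem
    · simp [eq_comm, h0] at h

/-- The dual lattice as an additive subgroup of `V*`. -/
def dualLatticeSub {V : Type*} [AddCommGroup V] [Module ℝ V]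
    (N : AddSubgroup V) : AddSubgroup (Module.Dual ℝ V) where
  carrier := dualLattice N
  zero_mem' := fun x _ => ⟨0, by simp⟩
  add_mem' := by
    rintro u v hu hv x hx
    obtain ⟨k, hk⟩ := hu x hx
    obtain ⟨l, hl⟩ := hv x hx
    exact ⟨k + l, by push_cast; simp [hk, hl]⟩
  neg_mem' := by
    rintro u hu x hx
    obtain ⟨k, hk⟩ := hu x hx
    exact ⟨-k, by push_cast; simp [hk]⟩

/-- The exponent vector of the monomial `Ẑ_σ = ∏_{ρ ∈ Σ₁ ∖ σ₁} Z_ρ`, where the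
rays of the fan are enumerated by `r : ι → Set V`. -/
noncomputable def zhat {V : Type*} [AddCommGroup V] [Module ℝ V]
    (N : AddSubgroup V) {ι : Type*} [Fintype ι] (r : ι → Set V)
    (σ : Set V) : ι →₀ ℕ :=
  Finsupp.equivFunOnFinite.symm (fun ρ => if IsFace N σ (r ρ) then 0 else 1)

theorem monomial_mem_SB {R : Type*} [CommRing R] {ι A : Type*} [AddCommGroup A]
    (α : ι → A) (B : AddSubgroup A) (d : ι →₀ ℕ) (c : R) (h : monDeg α d ∈ B) :
    MvPolynomial.monomial d c ∈ SB R α B := by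
  intro e he
  have := MvPolynomial.support_monomial_subset he
  rw [Finset.mem_singleton] at this
  subst this; exact h

theorem mem_SB_iff {R : Type*} [CommRing R] {ι A : Type*} [AddCommGroup A]
    {α : ι → A} {B : AddSubgroup A} {p : MvPolynomial ι R} :
    p ∈ SB R α B ↔ ∀ d ∈ p.support, monDeg α d ∈ B := Iff.rfl

set_option synthInstance.maxHeartbeats 1000000 in
set_option maxHeartbeats 1000000 in
/-- for a finite-index subgroup `B ⊆ A = coker c`, the ideal
`I_B = I ∩ S_B` of the `B`-restricted Cox ring `S_B` is generated by finitely
many monomials, where `I = ⟨Ẑ_σ ∣ σ ∈ Σ⟩`. -/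
theorem IB_fg_by_monomials {V : Type*} [AddCommGroup V] [Module ℝ V]
    [FiniteDimensional ℝ V] (N : AddSubgroup V) (hN : IsZStructure N)
    (F : Set (Set V)) (hF : IsFan N F)
    {ι : Type*} [Fintype ι] (r : ι → Set V) (hrinj : Function.Injective r)
    (hray : ∀ ρ, r ρ ∈ F ∧ IsRay (r ρ))
    (hsurj : ∀ ρ' ∈ F, IsRay ρ' → ∃ ρ, r ρ = ρ')
    (gen : Set V → V) (hgen : ∀ ρ ∈ F, IsRay ρ → IsMinGen N ρ (gen ρ))
    (c : dualLatticeSub N →+ (ι → ℤ))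
    (hc : ∀ (u : dualLatticeSub N) (ρ : ι),
      ((c u ρ : ℤ) : ℝ) = (u : Module.Dual ℝ V) (gen (r ρ)))
    {A : Type*} [AddCommGroup A] (a : (ι → ℤ) →+ A)
    (ha : Function.Surjective a) (hker : a.ker = c.range)
    (B : AddSubgroup A) (hB : B.index ≠ 0)
    (R : Type*) [CommRing R] :
    ∃ G : Finset (SB R (fun ρ => a (Pi.single ρ 1)) B),
      (∀ g ∈ G, ∃ d : ι →₀ ℕ, (g : MvPolynomial ι R) = MvPolynomial.monomial d 1) ∧
      Ideal.span (G : Set (SB R (fun ρ => a (Pi.single ρ 1)) B)) =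
        Ideal.comap (SB R (fun ρ => a (Pi.single ρ 1)) B).val
          (Ideal.span {p : MvPolynomial ι R |
            ∃ σ ∈ F, p = MvPolynomial.monomial (zhat N r σ) (1 : R)}) := by
  classical
  set α : ι → A := fun ρ => a (Pi.single ρ 1) with hα
  set E : Set (ι →₀ ℕ) := {d | monDeg α d ∈ B ∧ ∃ σ ∈ F, zhat N r σ ≤ d} with hEdef
  set M : Set (ι →₀ ℕ) := {d ∈ E | ∀ e ∈ E, e ≤ d → e = d} with hMdef
  have hMsub : M ⊆ E := Set.sep_subset _ _
  have hMfin : M.Finite := by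
    have hanti : IsAntichain (· ≤ ·) M := by
      rintro x ⟨hxE, hx⟩ y ⟨hyE, hy⟩ hxy hle
      exact hxy (hy x hxE hle)
    exact hanti.finite_of_partiallyWellOrderedOn ((Set.isPWO_of_wellQuasiOrderedLE E).mono hMsub)
  have hmin : ∀ d ∈ E, ∃ m ∈ M, m ≤ d := by
    intro d hd
    have hwf : {e ∈ E | e ≤ d}.IsWF := ((Set.isPWO_of_wellQuasiOrderedLE E).mono (Set.sep_subset _ _)).isWF
    have hne : {e ∈ E | e ≤ d}.Nonempty := ⟨d, hd, le_rfl⟩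
    refine ⟨hwf.min hne, ⟨(hwf.min_mem hne).1, ?_⟩, (hwf.min_mem hne).2⟩
    intro e he hle
    by_contra hne'
    exact hwf.not_lt_min hne ⟨he, hle.trans (hwf.min_mem hne).2⟩ (lt_of_le_of_ne hle hne')
  -- the span set as an image of monomials
  have hsetimg : {p : MvPolynomial ι R | ∃ σ ∈ F, p = MvPolynomial.monomial (zhat N r σ) (1 : R)}
      = (fun d => MvPolynomial.monomial d (1 : R)) '' (zhat N r '' F) := by
    ext p
    constructor
    · rintro ⟨σ, hσ, rfl⟩; exact ⟨zhat N r σ, ⟨σ, hσ, rfl⟩, rfl⟩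
    · rintro ⟨_, ⟨σ, hσ, rfl⟩, rfl⟩; exact ⟨σ, hσ, rfl⟩
  refine ⟨hMfin.toFinset.attach.image (fun (m : hMfin.toFinset) =>
    (⟨MvPolynomial.monomial m.1 1,
      monomial_mem_SB (R := R) α B m.1 1 (hMfin.mem_toFinset.1 m.2).1.1⟩ : SB R α B)), ?_, ?_⟩
  · intro g hg
    obtain ⟨m, _, rfl⟩ := Finset.mem_image.1 hg
    exact ⟨m.1, rfl⟩
  rw [hsetimg]
  apply le_antisymm
  · rw [Ideal.span_le]
    intro g hg
    obtain ⟨m, _, rfl⟩ := Finset.mem_image.1 hg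
    have hmE : m.1 ∈ E := hMsub (hMfin.mem_toFinset.1 m.2)
    obtain ⟨_, σ, hσF, hle⟩ := hmE
    show (MvPolynomial.monomial m.1 (1 : R)) ∈ Ideal.span _
    rw [MvPolynomial.mem_ideal_span_monomial_image]
    intro xi hxi
    have := MvPolynomial.support_monomial_subset hxi
    rw [Finset.mem_singleton] at this
    subst this
    exact ⟨zhat N r σ, ⟨σ, hσF, rfl⟩, hle⟩
  · intro x hx
    have hxI : (x : MvPolynomial ι R) ∈
        Ideal.span ((fun d => MvPolynomial.monomial d (1 : R)) '' (zhat N r '' F)) := hx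
    rw [MvPolynomial.mem_ideal_span_monomial_image] at hxI
    have hxE : ∀ d ∈ (x : MvPolynomial ι R).support, d ∈ E := by
      intro d hd
      obtain ⟨si, ⟨σ, hσF, rfl⟩, hle⟩ := hxI d hd
      exact ⟨x.2 d hd, σ, hσF, hle⟩
    have hxe : x = ∑ d ∈ (x : MvPolynomial ι R).support.attach,
        (⟨MvPolynomial.monomial d.1 ((x : MvPolynomial ι R).coeff d.1),
          monomial_mem_SB α B _ _ (x.2 d.1 d.2)⟩ : SB R α B) := by
      apply Subtype.ext
      rw [AddSubmonoidClass.coe_finset_sum]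
      simp only
      rw [Finset.sum_attach _ (fun d => MvPolynomial.monomial d
        ((x : MvPolynomial ι R).coeff d))]
      exact (MvPolynomial.support_sum_monomial_coeff _).symm
    rw [hxe]
    apply Ideal.sum_mem
    rintro ⟨d, hd⟩ -
    obtain ⟨m, hmM, hmd⟩ := hmin d (hxE d hd)
    have hmB : monDeg α m ∈ B := hmM.1.1
    have hdm : m + (d - m) = d := add_tsub_cancel_of_le hmd
    have hsubB : monDeg α (d - m) ∈ B := by
      have h2 := monDeg_add α m (d - m)
      rw [hdm] at h2
      have : monDeg α (d - m) = monDeg α d - monDeg α m := by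
        rw [h2]; abel
      rw [this]
      exact B.sub_mem (x.2 d hd) hmB
    have hfac : (⟨MvPolynomial.monomial d ((x : MvPolynomial ι R).coeff d),
          monomial_mem_SB α B _ _ (x.2 d hd)⟩ : SB R α B) =
        (⟨MvPolynomial.monomial (d - m) ((x : MvPolynomial ι R).coeff d),
          monomial_mem_SB α B _ _ hsubB⟩ : SB R α B) *
        ⟨MvPolynomial.monomial m 1, monomial_mem_SB α B m 1 hmB⟩ := by
      apply Subtype.ext
      rw [MulMemClass.coe_mul]
      simp only
      rw [MvPolynomial.monomial_mul, mul_one, tsub_add_cancel_of_le hmd]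
    rw [hfac]
    apply Ideal.mul_mem_left
    apply Ideal.subset_span
    rw [Finset.coe_image]
    exact ⟨⟨m, hMfin.mem_toFinset.2 hmM⟩, by simp, rfl⟩
end

section
/- The map sending a virtual polytope (m_σ + σ^∨)_{σ∈Σ} to (m_ρ(ρ_N))_{ρ∈Σ₁} ∈ ℤ^{Σ₁} is a well-defined injective group homomorphism from the group of virtual polytopes over a full fan Σ to ℤ^{Σ₁}. -/
open scoped Classical

section Aux

variable {V : Type*} [AddCommGroup V] [Module ℝ V]

/-- cone generated by a finset -/
def CC (s : Finset V) : Set V :=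
  {x | ∃ c : V → ℝ, (∀ v, 0 ≤ c v) ∧ x = ∑ v ∈ s, c v • v}

lemma zero_mem_CC (s : Finset V) : (0 : V) ∈ CC s :=
  ⟨0, fun _ => le_rfl, by simp⟩

lemma sum_ite_smul (s : Finset V) {w : V} (hw : w ∈ s) (r : ℝ) :
    ∑ u ∈ s, (if u = w then r else 0) • u = r • w := by
  rw [Finset.sum_congr rfl (g := fun u => if u = w then r • w else 0) (fun u _ => by
    beta_reduce
    split_ifs with h
    · rw [h]
    · rw [zero_smul])]
  rw [Finset.sum_ite_eq' s w (fun _ => r • w), if_pos hw]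

lemma mem_CC_of_mem {s : Finset V} {v : V} (hv : v ∈ s) : v ∈ CC s := by
  refine ⟨fun u => if u = v then 1 else 0, fun u => ?_, ?_⟩
  · beta_reduce; split_ifs <;> norm_num
  · beta_reduce; rw [sum_ite_smul s hv 1, one_smul]

lemma CC_mono {s t : Finset V} (h : s ⊆ t) : CC s ⊆ CC t := by
  rintro x ⟨c, hc, rfl⟩
  refine ⟨fun u => if u ∈ s then c u else 0, fun u => ?_, ?_⟩
  · beta_reduce; split_ifs; exacts [hc u, le_rfl]
  · beta_reduce
    rw [← Finset.sum_subset h (fun u _ hus => by rw [if_neg hus, zero_smul])]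
    exact Finset.sum_congr rfl fun u hu => by rw [if_pos hu]

lemma smul_mem_CC {s : Finset V} {x : V} {r : ℝ} (hr : 0 ≤ r) (hx : x ∈ CC s) :
    r • x ∈ CC s := by
  obtain ⟨c, hc, rfl⟩ := hx
  refine ⟨fun u => r * c u, fun u => mul_nonneg hr (hc u), ?_⟩
  beta_reduce
  rw [Finset.smul_sum]
  exact Finset.sum_congr rfl fun u _ => by rw [smul_smul]

lemma sharp_smul_eq_zero {s : Finset V} (hsh : Sharp (CC s)) {c : V → ℝ}
    (hc : ∀ v, 0 ≤ c v) (hsum : ∑ u ∈ s, c u • u = 0) :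
    ∀ u₀ ∈ s, c u₀ • u₀ = 0 := by
  intro u₀ h0
  have h1 : c u₀ • u₀ ∈ CC s := by
    refine ⟨fun u => if u = u₀ then c u₀ else 0, fun u => ?_, ?_⟩
    · beta_reduce; split_ifs; exacts [hc u₀, le_rfl]
    · beta_reduce; rw [sum_ite_smul s h0 (c u₀)]
  have h2 : -(c u₀ • u₀) ∈ CC s := by
    refine ⟨fun u => if u = u₀ then 0 else c u, fun u => ?_, ?_⟩
    · beta_reduce; split_ifs; exacts [le_rfl, hc u]
    · beta_reduce
      have key : ∑ u ∈ s, ((if u = u₀ then (0:ℝ) else c u) • u)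
          = ∑ u ∈ s, c u • u - ∑ u ∈ s, (if u = u₀ then c u₀ else 0) • u := by
        rw [← Finset.sum_sub_distrib]
        refine Finset.sum_congr rfl fun u _ => ?_
        split_ifs with h
        · rw [h, zero_smul]; abel
        · rw [zero_smul, sub_zero]
      rw [key, hsum, sum_ite_smul s h0 (c u₀), zero_sub]
  exact hsh _ h1 h2

lemma CC_erase {s : Finset V} {v : V} (hv : v ∈ s) (hred : v ∈ CC (s.erase v)) :
    CC s = CC (s.erase v) := by
  refine Set.Subset.antisymm ?_ (CC_mono (Finset.erase_subset _ _))
  rintro x ⟨c, hc, rfl⟩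
  obtain ⟨dcf, hd, hveq⟩ := hred
  refine ⟨fun u => c u + c v * dcf u,
    fun u => add_nonneg (hc u) (mul_nonneg (hc v) (hd u)), ?_⟩
  beta_reduce
  have hveq' : c v • v = ∑ u ∈ s.erase v, (c v * dcf u) • u := by
    have : c v • v = c v • ∑ u ∈ s.erase v, dcf u • u := by rw [← hveq]
    rw [this, Finset.smul_sum]
    exact Finset.sum_congr rfl fun u _ => by rw [smul_smul]
  rw [← Finset.add_sum_erase s _ hv, hveq']
  simp only [add_smul, Finset.sum_add_distrib]
  abel

lemma dualLattice_sum {N : AddSubgroup V} {ι : Type*} (t : Finset ι)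
    (f : ι → Module.Dual ℝ V) (hf : ∀ i ∈ t, f i ∈ dualLattice N) :
    (∑ i ∈ t, f i) ∈ dualLattice N := by
  classical
  induction t using Finset.induction_on with
  | empty => intro x _; exact ⟨0, by simp⟩
  | insert a t' ha IH =>
      intro x hx
      obtain ⟨k, hk⟩ := hf a (Finset.mem_insert_self _ _) x hx
      obtain ⟨l, hl⟩ := IH (fun i hi => hf i (Finset.mem_insert_of_mem hi)) x hx
      exact ⟨k + l, by rw [Finset.sum_insert ha]; push_cast; simp [hk, hl]⟩


lemma farkas {n : ℕ} {ι : Type*} (s : Finset ι) (vec : ι → (Fin n → ℚ)) (x : Fin n → ℚ)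
    (hx : ¬ ∃ c : ι → ℚ, (∀ i, 0 ≤ c i) ∧ x = ∑ i ∈ s, c i • vec i) :
    ∃ f : (Fin n → ℚ) →ₗ[ℚ] ℚ, (∀ i ∈ s, 0 ≤ f (vec i)) ∧ f x < 0 := by
  classical
  induction s using Finset.induction_on generalizing vec x with
  | empty =>
      have hx0 : x ≠ 0 := by
        intro h
        exact hx ⟨0, fun i => le_rfl, by simp [h]⟩
      obtain ⟨j, hj⟩ := Function.ne_iff.mp hx0
      rcases lt_or_gt_of_ne (show x j ≠ 0 by simpa using hj) with hja | hja
      · exact ⟨LinearMap.proj j, by simp, by simpa using hja⟩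
      · refine ⟨-LinearMap.proj j, by simp, ?_⟩
        simpa using hja
  | insert a t ha IH =>
      have hxt : ¬ ∃ c : ι → ℚ, (∀ i, 0 ≤ c i) ∧ x = ∑ i ∈ t, c i • vec i := by
        rintro ⟨c, hc, hsum⟩
        refine hx ⟨Function.update c a 0, fun i => ?_, ?_⟩
        · rcases eq_or_ne i a with rfl | h
          · simp
          · simpa [Function.update_of_ne h] using hc i
        · rw [Finset.sum_insert ha, Function.update_self, zero_smul, zero_add,
            Finset.sum_congr rfl (fun i hi =>
              by rw [Function.update_of_ne (ne_of_mem_of_not_mem hi ha)])]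
          exact hsum
      obtain ⟨f, hf0, hfx⟩ := IH vec x hxt
      by_cases hfa : 0 ≤ f (vec a)
      · refine ⟨f, fun i hi => ?_, hfx⟩
        rcases Finset.mem_insert.mp hi with rfl | h
        exacts [hfa, hf0 i h]
      · push_neg at hfa
        have hfa' : f (vec a) ≠ 0 := ne_of_lt hfa
        set vec' : ι → Fin n → ℚ := fun i => vec i - (f (vec i) / f (vec a)) • vec a with hvec'
        set x' : Fin n → ℚ := x - (f x / f (vec a)) • vec a with hx'def
        have expand : ∀ c : ι → ℚ, ∑ i ∈ t, c i • vec' i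
            = ∑ i ∈ t, c i • vec i - (∑ i ∈ t, c i * (f (vec i) / f (vec a))) • vec a := by
          intro c
          rw [Finset.sum_smul, ← Finset.sum_sub_distrib]
          refine Finset.sum_congr rfl fun i _ => ?_
          rw [hvec', smul_sub, smul_smul]
        have hx't : ¬ ∃ c : ι → ℚ, (∀ i, 0 ≤ c i) ∧ x' = ∑ i ∈ t, c i • vec' i := by
          rintro ⟨c, hc, hs⟩
          set β : ℚ := f x / f (vec a) - ∑ i ∈ t, c i * (f (vec i) / f (vec a)) with hβ
          have hβ0 : 0 ≤ β := by
            have h1 : 0 < f x / f (vec a) := div_pos_of_neg_of_neg hfx hfa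
            have h2 : ∑ i ∈ t, c i * (f (vec i) / f (vec a)) ≤ 0 := by
              refine Finset.sum_nonpos fun i hi => ?_
              exact mul_nonpos_of_nonneg_of_nonpos (hc i)
                (div_nonpos_of_nonneg_of_nonpos (hf0 i hi) hfa.le)
            rw [hβ]; linarith
          refine hx ⟨Function.update c a β, fun i => ?_, ?_⟩
          · rcases eq_or_ne i a with rfl | h
            · simpa using hβ0
            · simpa [Function.update_of_ne h] using hc i
          · rw [Finset.sum_insert ha, Function.update_self,
              Finset.sum_congr rfl (fun i hi =>
                by rw [Function.update_of_ne (ne_of_mem_of_not_mem hi ha)])]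
            have : x = x' + (f x / f (vec a)) • vec a := by rw [hx'def]; abel
            rw [this, hs, expand c, hβ, sub_smul]
            abel
        obtain ⟨g, hg0, hgx⟩ := IH vec' x' hx't
        refine ⟨g - (g (vec a) / f (vec a)) • f, fun i hi => ?_, ?_⟩
        · rcases Finset.mem_insert.mp hi with rfl | h
          · simp only [LinearMap.sub_apply, LinearMap.smul_apply, smul_eq_mul]
            rw [div_mul_cancel₀ _ hfa']
            simp
          · have := hg0 i h
            have hgv : g (vec' i) = g (vec i) - g (vec a) / f (vec a) * f (vec i) := by
              rw [hvec', map_sub, map_smul, smul_eq_mul]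
              ring
            simp only [LinearMap.sub_apply, LinearMap.smul_apply, smul_eq_mul]
            linarith [hgv ▸ this]
        · have hgx' : g x' = g x - g (vec a) / f (vec a) * f x := by
            rw [hx'def, map_sub, map_smul, smul_eq_mul]
            ring
          simp only [LinearMap.sub_apply, LinearMap.smul_apply, smul_eq_mul]
          linarith [hgx' ▸ hgx]

lemma expose_single {V : Type*} [AddCommGroup V] [Module ℝ V] [FiniteDimensional ℝ V]
    {N : AddSubgroup V} (hN : IsZStructure N)
    {s : Finset V} (hsN : ↑s ⊆ (N : Set V)) (hsharp : Sharp (CC s))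
    (hirr : ∀ u ∈ s, u ∉ CC (s.erase u))
    {v w : V} (hv : v ∈ s) (hw : w ∈ s) (hwv : w ≠ v) :
    ∃ u : Module.Dual ℝ V, u ∈ dualLattice N ∧ (∀ w' ∈ s, 0 ≤ u w') ∧ u v = 0 ∧ 0 < u w := by
  classical
  obtain ⟨hspan, ⟨b⟩⟩ := hN
  set n := Module.finrank ℝ V with hn
  -- the ℤ-basis of N gives an ℝ-basis of V
  have hcoeN : ∀ (y : N), ((y : V)) = ∑ i, (b.repr y i) • ((b i : V)) := by
    intro y
    conv_lhs => rw [← b.sum_repr y]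
    push_cast
    rfl
  have hrange : ⊤ ≤ Submodule.span ℝ (Set.range fun i : Fin n => (b i : V)) := by
    rw [← hspan]
    refine (Submodule.span_le.mpr ?_).trans le_rfl
    intro x hx
    rw [show x = ((⟨x, hx⟩ : N) : V) from rfl, hcoeN ⟨x, hx⟩]
    exact Submodule.sum_mem _ fun i _ =>
      zsmul_mem (Submodule.subset_span (Set.mem_range_self i)) _
  let E : Module.Basis (Fin n) ℝ V :=
    basisOfTopLeSpanOfCardEqFinrank (fun i => (b i : V)) hrange (by simp [hn])
  have hE : ∀ i, E i = (b i : V) := fun i => by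
    rw [show E = basisOfTopLeSpanOfCardEqFinrank (fun i => (b i : V)) hrange (by simp [hn]) from rfl,
      coe_basisOfTopLeSpanOfCardEqFinrank]
  set coords : V → (Fin n → ℚ) := fun x =>
    if h : x ∈ N then (fun i => ((b.repr ⟨x, h⟩ i : ℤ) : ℚ)) else 0 with hcoords
  set φ : (Fin n → ℚ) → V := fun q => ∑ i, ((q i : ℝ)) • E i with hφ
  have hφcoords : ∀ x, ∀ hx : x ∈ N, φ (coords x) = x := by
    intro x hx
    simp only [hφ, hcoords, dif_pos hx]
    have hx' : x = ((⟨x, hx⟩ : N) : V) := rfl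
    conv_rhs => rw [hx', hcoeN ⟨x, hx⟩]
    refine Finset.sum_congr rfl fun i _ => ?_
    rw [hE]
    push_cast
    rw [Int.cast_smul_eq_zsmul]
  have hrepr : ∀ x, ∀ hx : x ∈ N, ∀ i, E.repr x i = ((coords x i : ℚ) : ℝ) := by
    intro x hx i
    conv_lhs => rw [← hφcoords x hx]
    simp only [hφ]
    rw [map_sum]
    simp only [map_smul, Module.Basis.repr_self]
    rw [Finset.sum_apply']
    simp [Finsupp.single_apply]
  have hφsum : ∀ (t : Finset V) (g : V → ℚ), (↑t ⊆ (N : Set V)) →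
      φ (∑ u ∈ t, g u • coords u) = ∑ u ∈ t, ((g u : ℝ)) • u := by
    intro t g ht
    simp only [hφ]
    have h1 : ∀ i, ((∑ u ∈ t, g u • coords u) i : ℝ)
        = ∑ u ∈ t, ((g u : ℝ)) * ((coords u i : ℚ) : ℝ) := by
      intro i
      rw [Finset.sum_apply]
      push_cast [Pi.smul_apply, smul_eq_mul]
      rfl
    calc ∑ i, (((∑ u ∈ t, g u • coords u) i : ℚ) : ℝ) • E i
        = ∑ i, ∑ u ∈ t, (((g u : ℝ)) * ((coords u i : ℚ) : ℝ)) • E i := by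
          refine Finset.sum_congr rfl fun i _ => ?_
          rw [h1 i, Finset.sum_smul]
      _ = ∑ u ∈ t, ∑ i, (((g u : ℝ)) * ((coords u i : ℚ) : ℝ)) • E i := Finset.sum_comm
      _ = ∑ u ∈ t, ((g u : ℝ)) • u := by
          refine Finset.sum_congr rfl fun u hu => ?_
          rw [show ((g u : ℝ)) • u = ((g u : ℝ)) • φ (coords u) by rw [hφcoords u (ht hu)]]
          simp only [hφ]
          rw [Finset.smul_sum]
          exact Finset.sum_congr rfl fun i _ => by rw [mul_smul]
  have hφneg : ∀ q, φ (-q) = - φ q := by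
    intro q
    simp only [hφ]
    rw [← Finset.sum_neg_distrib]
    refine Finset.sum_congr rfl fun i _ => ?_
    simp only [Pi.neg_apply]
    push_cast
    rw [neg_smul]
  have hv0 : v ≠ 0 := fun h => hirr v hv (h ▸ zero_mem_CC _)
  have hw0 : w ≠ 0 := fun h => hirr w hw (h ▸ zero_mem_CC _)
  have hvN : v ∈ N := hsN hv
  have hwN : w ∈ N := hsN hw
  have hnvs : -v ∉ s := fun hmem =>
    hv0 (hsharp v (mem_CC_of_mem hv) (mem_CC_of_mem hmem))
  by_cases hA : ∃ c : V → ℚ, (∀ u, 0 ≤ c u) ∧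
      (-(coords w)) = ∑ u ∈ insert (-v) s, c u • coords u
  · exfalso
    obtain ⟨c, hc, hsumQ⟩ := hA
    have hφeq := congrArg φ hsumQ
    rw [hφneg, hφcoords w hwN,
      hφsum (insert (-v) s) c (by
        intro u hu
        simp only [Finset.coe_insert, Set.mem_insert_iff, Finset.mem_coe] at hu
        rcases hu with rfl | hu
        · exact neg_mem hvN
        · exact hsN hu),
      Finset.sum_insert hnvs] at hφeq
    set tR : ℝ := ((c (-v) : ℚ) : ℝ) with htR
    set cc : V → ℝ := fun u => ((c u : ℚ) : ℝ) with hccdef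
    have hcc0 : ∀ u, 0 ≤ cc u := fun u => by
      simp only [hccdef]; exact_mod_cast hc u
    -- hφeq : -w = tR • (-v) + ∑ u ∈ s, cc u • u
    have h2 : tR • v = w + ∑ u ∈ s, cc u • u := by
      have h3 : w = tR • v - ∑ u ∈ s, cc u • u := by
        rw [← neg_neg w, hφeq, smul_neg, neg_add, neg_neg]
        abel
      rw [h3]; abel
    have hsplit : ∑ u ∈ s, cc u • u = cc v • v + ∑ u ∈ s.erase v, cc u • u :=
      (Finset.add_sum_erase s (fun u => cc u • u) hv).symm
    have hwe : w ∈ s.erase v := Finset.mem_erase.mpr ⟨hwv, hw⟩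
    set δ : ℝ := tR - cc v with hδ
    have hsum_w : ∑ u ∈ s.erase v, (cc u + if u = w then (1:ℝ) else 0) • u
        = ∑ u ∈ s.erase v, cc u • u + w := by
      simp only [add_smul, Finset.sum_add_distrib]
      rw [sum_ite_smul _ hwe 1, one_smul]
    rcases le_or_gt δ 0 with hδ0 | hδ0
    · -- sum of nonneg combos equals zero, coefficient of w positive: w = 0
      set Ecoef : V → ℝ :=
        fun u => if u = v then -δ else cc u + (if u = w then 1 else 0) with hEc
      have hEc0 : ∀ u, 0 ≤ Ecoef u := by
        intro u
        simp only [hEc]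
        split_ifs with h1 h2
        · linarith
        · have := hcc0 u; linarith
        · have := hcc0 u; linarith
      have hEsum : ∑ u ∈ s, Ecoef u • u = 0 := by
        rw [← Finset.add_sum_erase s _ hv]
        have e1 : Ecoef v = -δ := by simp [hEc]
        have e2 : ∑ u ∈ s.erase v, Ecoef u • u
            = ∑ u ∈ s.erase v, cc u • u + w := by
          rw [← hsum_w]
          refine Finset.sum_congr rfl fun u hu => ?_
          have huv : u ≠ v := (Finset.mem_erase.mp hu).1
          simp [hEc, huv]
        have h4 : tR • v = w + (cc v • v + ∑ u ∈ s.erase v, cc u • u) := by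
          rw [h2, hsplit]
        rw [e1, e2, hδ, neg_sub, sub_smul, h4]
        abel
      have hzw := sharp_smul_eq_zero hsharp hEc0 hEsum w hw
      have hEw : Ecoef w = cc w + 1 := by simp [hEc, hwv]
      rw [hEw] at hzw
      rcases smul_eq_zero.mp hzw with h | h
      · have := hcc0 w; linarith
      · exact hw0 h
    · -- v ∈ CC (s.erase v)
      refine hirr v hv ?_
      have hmem : w + ∑ u ∈ s.erase v, cc u • u ∈ CC (s.erase v) := by
        refine ⟨fun u => cc u + if u = w then 1 else 0,
          fun u => by beta_reduce; split_ifs <;> [linarith [hcc0 u]; simpa using hcc0 u], ?_⟩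
        beta_reduce
        rw [hsum_w]
        abel
      have h4 : δ • v = w + ∑ u ∈ s.erase v, cc u • u := by
        rw [hδ, sub_smul, h2, hsplit]
        abel
      have hveq2 : v = δ⁻¹ • (w + ∑ u ∈ s.erase v, cc u • u) := by
        rw [← h4, smul_smul, inv_mul_cancel₀ (ne_of_gt hδ0), one_smul]
      have := smul_mem_CC (inv_nonneg.mpr hδ0.le) hmem
      rwa [← hveq2] at this
  · obtain ⟨f, hf0, hfx⟩ := farkas (insert (-v) s) coords (-(coords w)) hA
    have hcneg : coords (-v) = -(coords v) := by
      simp only [hcoords, dif_pos (neg_mem hvN), dif_pos hvN]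
      funext i
      have : (⟨-v, neg_mem hvN⟩ : N) = -(⟨v, hvN⟩ : N) := rfl
      rw [this, map_neg]
      push_cast
      rfl
    have hfv : f (coords v) = 0 := by
      have h1 : 0 ≤ f (coords v) := hf0 v (Finset.mem_insert_of_mem hv)
      have h2 : 0 ≤ f (coords (-v)) := hf0 (-v) (Finset.mem_insert_self _ _)
      rw [hcneg, map_neg] at h2
      linarith
    have hfw : 0 < f (coords w) := by
      rw [map_neg] at hfx
      linarith
    have hfs : ∀ u ∈ s, 0 ≤ f (coords u) := fun u hu =>
      hf0 u (Finset.mem_insert_of_mem hu)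
    -- clear denominators
    obtain ⟨D, hD0, hDk⟩ : ∃ D : ℕ, 0 < D ∧ ∀ i : Fin n, ∃ k : ℤ, ((D : ℚ)) * f (fun j => if i = j then 1 else 0) = k := by
      refine ⟨∏ i, (f (fun j => if i = j then 1 else 0)).den, Finset.prod_pos (fun i _ => (f (fun j => if i = j then 1 else 0)).den_pos), ?_⟩
      intro i
      obtain ⟨m, hm⟩ := Finset.dvd_prod_of_mem (fun i => (f (fun j => if i = j then 1 else 0)).den) (Finset.mem_univ i)
      refine ⟨m * (f (fun j => if i = j then 1 else 0)).num, ?_⟩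
      rw [hm]
      push_cast
      linear_combination (m : ℚ) * Rat.den_mul_eq_num (f (fun j => if i = j then 1 else 0))
    choose k hk using hDk
    set F : Module.Dual ℝ V := ∑ i, (((k i : ℤ) : ℝ)) • E.coord i with hF
    have hFval : ∀ x, ∀ hx : x ∈ N, F x = (((D : ℚ) * f (coords x) : ℚ) : ℝ) := by
      intro x hx
      rw [hF, LinearMap.sum_apply]
      simp only [LinearMap.smul_apply, Module.Basis.coord_apply, smul_eq_mul]
      rw [Finset.sum_congr rfl fun i _ => by rw [hrepr x hx i]]
      have hfq : (D:ℚ) * f (coords x) = ∑ i, (coords x i) * (k i : ℚ) := by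
        rw [LinearMap.pi_apply_eq_sum_univ f (coords x), Finset.mul_sum]
        refine Finset.sum_congr rfl fun i _ => ?_
        rw [smul_eq_mul, ← hk i]
        ring
      rw [hfq]
      push_cast
      exact Finset.sum_congr rfl fun i _ => by ring
    have hFlat : F ∈ dualLattice N := by
      intro x hx
      refine ⟨∑ i, k i * (b.repr ⟨x, hx⟩ i), ?_⟩
      rw [hF, LinearMap.sum_apply]
      simp only [LinearMap.smul_apply, Module.Basis.coord_apply, smul_eq_mul]
      rw [Finset.sum_congr rfl fun i _ => by rw [hrepr x hx i]]
      simp only [hcoords, dif_pos hx]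
      push_cast
      rfl
    refine ⟨F, hFlat, ?_, ?_, ?_⟩
    · intro w' hw'
      rw [hFval w' (hsN hw')]
      have : (0:ℚ) ≤ (D:ℚ) * f (coords w') := mul_nonneg (by positivity) (hfs w' hw')
      exact_mod_cast this
    · rw [hFval v hvN, hfv, mul_zero]
      norm_num
    · rw [hFval w hwN]
      have : (0:ℚ) < (D:ℚ) * f (coords w) := mul_pos (by exact_mod_cast hD0) hfw
      exact_mod_cast this

lemma expose {V : Type*} [AddCommGroup V] [Module ℝ V] [FiniteDimensional ℝ V]
    {N : AddSubgroup V} (hN : IsZStructure N)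
    {s : Finset V} (hsN : ↑s ⊆ (N : Set V)) (hsharp : Sharp (CC s))
    (hirr : ∀ u ∈ s, u ∉ CC (s.erase u)) {v : V} (hv : v ∈ s) :
    ∃ u : Module.Dual ℝ V, u ∈ dualLattice N ∧ (∀ w' ∈ s, 0 ≤ u w') ∧ u v = 0 ∧
      ∀ w ∈ s, w ≠ v → 0 < u w := by
  classical
  have hch : ∀ w : V, ∃ uw : Module.Dual ℝ V, (w ∈ s.erase v) →
      (uw ∈ dualLattice N ∧ (∀ w' ∈ s, 0 ≤ uw w') ∧ uw v = 0 ∧ 0 < uw w) := by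
    intro w
    by_cases h : w ∈ s.erase v
    · obtain ⟨hwv, hws⟩ := Finset.mem_erase.mp h
      obtain ⟨u, h1, h2, h3, h4⟩ := expose_single hN hsN hsharp hirr hv hws hwv
      exact ⟨u, fun _ => ⟨h1, h2, h3, h4⟩⟩
    · exact ⟨0, fun hc => absurd hc h⟩
  choose g hg using hch
  refine ⟨∑ w ∈ s.erase v, g w, ?_, ?_, ?_, ?_⟩
  · exact dualLattice_sum _ _ fun w hw => (hg w hw).1
  · intro w' hw'
    rw [LinearMap.sum_apply]
    exact Finset.sum_nonneg fun w hw => (hg w hw).2.1 w' hw'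
  · rw [LinearMap.sum_apply]
    exact Finset.sum_eq_zero fun w hw => (hg w hw).2.2.1
  · intro w hws hwv
    have hwe : w ∈ s.erase v := Finset.mem_erase.mpr ⟨hwv, hws⟩
    rw [LinearMap.sum_apply]
    exact Finset.sum_pos' (fun w' hw' => (hg w' hw').2.1 w hws)
      ⟨w, hwe, (hg w hwe).2.2.2⟩

lemma keylem {V : Type*} [AddCommGroup V] [Module ℝ V] [FiniteDimensional ℝ V]
    {N : AddSubgroup V} (hN : IsZStructure N) (d : Module.Dual ℝ V) :
    ∀ (k : ℕ) (s : Finset V), s.card ≤ k → ↑s ⊆ (N : Set V) →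
      ∀ σ : Set V, σ = CC s → Sharp σ →
      (∀ τ, IsFace N σ τ → IsRay τ → ∀ x ∈ τ, d x = 0) →
      ∀ x ∈ σ, d x = 0 := by
  classical
  intro k
  induction k with
  | zero =>
      intro s hcard hsN σ hσ hsh H x hx
      have hs : s = ∅ := Finset.card_eq_zero.mp (Nat.le_zero.mp hcard)
      subst hs
      subst hσ
      obtain ⟨c, _, rfl⟩ := hx
      simp
  | succ k IH =>
      intro s hcard hsN σ hσ hsh H
      by_cases hred : ∃ v ∈ s, v ∈ CC (s.erase v)
      · obtain ⟨v, hv, hvr⟩ := hred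
        refine IH (s.erase v) ?_ (fun u hu => hsN (Finset.erase_subset _ _ hu)) σ
          (by rw [hσ, CC_erase hv hvr]) hsh H
        have h1 := Finset.card_erase_of_mem hv
        omega
      · push_neg at hred
        subst hσ
        have hdv : ∀ v ∈ s, d v = 0 := by
          intro v hv
          obtain ⟨U, hU1, hU2, hU3, hU4⟩ := expose hN hsN hsh hred hv
          set τ : Set V := CC s ∩ {x | U x = 0} with hτ
          have hface : IsFace N (CC s) τ := by
            refine ⟨U, ⟨?_, hU1⟩, rfl⟩
            rintro x ⟨c, hc, rfl⟩
            rw [map_sum]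
            refine Finset.sum_nonneg fun u hu => ?_
            rw [map_smul, smul_eq_mul]
            exact mul_nonneg (hc u) (hU2 u hu)
          have hv0 : v ≠ 0 := fun h => hred v hv (h ▸ zero_mem_CC _)
          have hτv : τ = CC {v} := by
            apply Set.Subset.antisymm
            · rintro x ⟨⟨c, hc, rfl⟩, hker⟩
              have hker' : ∑ u ∈ s, c u * U u = 0 := by
                have : U (∑ u ∈ s, c u • u) = 0 := hker
                rw [map_sum] at this
                simpa [map_smul, smul_eq_mul] using this
              have hterm : ∀ u ∈ s, c u * U u = 0 :=
                (Finset.sum_eq_zero_iff_of_nonneg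
                  (fun u hu => mul_nonneg (hc u) (hU2 u hu))).mp hker'
              have hxv : ∑ u ∈ s, c u • u = c v • v := by
                refine Finset.sum_eq_single_of_mem v hv fun u hu hne => ?_
                have : c u = 0 := by
                  have h1 := hterm u hu
                  have h2 := hU4 u hu hne
                  rcases mul_eq_zero.mp h1 with h | h
                  · exact h
                  · exact absurd h (ne_of_gt h2)
                rw [this, zero_smul]
              rw [hxv]
              exact ⟨fun _ => c v, fun _ => hc v, by simp⟩
            · intro x hx
              obtain ⟨c, hc, hx'⟩ := id hx
              have hxv : x = c v • v := by simpa using hx'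
              refine ⟨CC_mono (Finset.singleton_subset_iff.mpr hv) hx, ?_⟩
              show U x = 0
              rw [hxv, map_smul, smul_eq_mul, hU3, mul_zero]
          have hray : IsRay τ := by
            rw [hτv]
            have hspanτ : Submodule.span ℝ (CC ({v} : Finset V)) =
                Submodule.span ℝ ({v} : Set V) := by
              apply le_antisymm
              · rw [Submodule.span_le]
                rintro x ⟨c, hc, rfl⟩
                have : ∑ u ∈ ({v} : Finset V), c u • u = c v • v := by simp
                rw [this]
                exact Submodule.smul_mem _ _ (Submodule.subset_span rfl)
              · rw [Submodule.span_le]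
                intro x hx
                rw [Set.mem_singleton_iff] at hx
                rw [hx]
                exact Submodule.subset_span (mem_CC_of_mem (Finset.mem_singleton_self v))
            show Module.finrank ℝ (Submodule.span ℝ (CC ({v} : Finset V))) = 1
            rw [hspanτ, finrank_span_singleton hv0]
          exact H τ hface hray v ⟨mem_CC_of_mem hv, by show U v = 0; exact hU3⟩
        rintro x ⟨c, hc, rfl⟩
        rw [map_sum]
        refine Finset.sum_eq_zero fun u hu => ?_
        rw [map_smul, smul_eq_mul, hdv u hu, mul_zero]

end Aux

/-- the map sending a virtual polytope `(m_σ + σ^∨)_σ` over a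
full fan to `(m_ρ(ρ_N))_{ρ ∈ Σ₁} ∈ ℤ^{Σ₁}` is a well-defined injective group
homomorphism: its values are integers, it is additive in the representatives,
and two virtual polytopes coincide (as families of subsets of `V*`) iff their
images coincide. -/
theorem virtualPolytope_embedding {V : Type*} [AddCommGroup V] [Module ℝ V]
    [FiniteDimensional ℝ V] (N : AddSubgroup V) (hN : IsZStructure N)
    (F : Set (Set V)) (hF : IsFan N F) (hfull : Submodule.span ℝ (⋃₀ F) = ⊤)
    {ι : Type*} [Fintype ι] (r : ι → Set V) (hrinj : Function.Injective r)
    (hray : ∀ ρ, r ρ ∈ F ∧ IsRay (r ρ))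
    (hsurj : ∀ ρ' ∈ F, IsRay ρ' → ∃ ρ, r ρ = ρ')
    (gen : Set V → V) (hgen : ∀ ρ ∈ F, IsRay ρ → IsMinGen N ρ (gen ρ))
    (m m' : Set V → Module.Dual ℝ V)
    (hm : ∀ σ ∈ F, m σ ∈ dualLattice N) (hm' : ∀ σ ∈ F, m' σ ∈ dualLattice N)
    (hvp : ∀ σ ∈ F, ∀ τ ∈ F, IsFace N σ τ → ∀ x ∈ τ, (m σ - m τ) x = 0)
    (hvp' : ∀ σ ∈ F, ∀ τ ∈ F, IsFace N σ τ → ∀ x ∈ τ, (m' σ - m' τ) x = 0) :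
    (∀ ρ : ι, ∃ k : ℤ, m (r ρ) (gen (r ρ)) = (k : ℝ)) ∧
    (∀ ρ : ι, (m (r ρ) + m' (r ρ)) (gen (r ρ)) =
        m (r ρ) (gen (r ρ)) + m' (r ρ) (gen (r ρ))) ∧
    ((∀ σ ∈ F, (fun u => m σ + u) '' dualCone σ =
        (fun u => m' σ + u) '' dualCone σ) ↔
      ∀ ρ : ι, m (r ρ) (gen (r ρ)) = m' (r ρ) (gen (r ρ))) := by
  classical
  refine ⟨?_, ?_, ?_⟩
  · intro ρ
    exact hm (r ρ) (hray ρ).1 (gen (r ρ)) (hgen (r ρ) (hray ρ).1 (hray ρ).2).1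
  · intro ρ
    simp [LinearMap.add_apply]
  · constructor
    · intro heq ρ
      have hσF : r ρ ∈ F := (hray ρ).1
      have hzero : (0 : Module.Dual ℝ V) ∈ dualCone (r ρ) := fun x _ => by simp
      have h1 : m (r ρ) ∈ (fun u => m' (r ρ) + u) '' dualCone (r ρ) := by
        rw [← heq (r ρ) hσF]
        exact ⟨0, hzero, by simp⟩
      have h2 : m' (r ρ) ∈ (fun u => m (r ρ) + u) '' dualCone (r ρ) := by
        rw [heq (r ρ) hσF]
        exact ⟨0, hzero, by simp⟩
      obtain ⟨u, hu, huev⟩ := h1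
      obtain ⟨u', hu', huev'⟩ := h2
      simp only at huev huev'
      have hsum0 : u' + u = 0 := by
        have h := huev
        rw [← huev'] at h
        have h' : m (r ρ) + (u' + u) = m (r ρ) + 0 := by
          rw [add_zero, ← add_assoc]
          exact h
        exact add_left_cancel h'
      have hmg := hgen (r ρ) hσF (hray ρ).2
      have hgenmem : gen (r ρ) ∈ r ρ := by
        have hmem : gen (r ρ) ∈ {y : V | ∃ t : ℝ, 0 ≤ t ∧ y = t • gen (r ρ)} :=
          ⟨1, zero_le_one, (one_smul ℝ _).symm⟩
        rwa [← hmg.2.1] at hmem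
      have h3 : 0 ≤ u (gen (r ρ)) := hu _ hgenmem
      have h4 : 0 ≤ u' (gen (r ρ)) := hu' _ hgenmem
      have h5 : u' (gen (r ρ)) + u (gen (r ρ)) = 0 := by
        have := congrArg (fun f : Module.Dual ℝ V => f (gen (r ρ))) hsum0
        simpa using this
      have h6 : u (gen (r ρ)) = 0 := by linarith
      have h7 := congrArg (fun f : Module.Dual ℝ V => f (gen (r ρ))) huev
      simp only [LinearMap.add_apply] at h7
      rw [h6, add_zero] at h7
      exact h7.symm
    · intro hval σ hσF
      obtain ⟨⟨s, hsN, hσs⟩, hsharp⟩ := hF.2.1 σ hσF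
      have hd : ∀ x ∈ σ, (m σ - m' σ) x = 0 := by
        refine keylem hN (m σ - m' σ) s.card s le_rfl hsN σ hσs hsharp ?_
        intro τ hface hrayτ x hx
        have hτF : τ ∈ F := hF.2.2.1 σ hσF τ hface
        obtain ⟨ρ, hρ⟩ := hsurj τ hτF hrayτ
        have h1 := hvp σ hσF τ hτF hface x hx
        have h2 := hvp' σ hσF τ hτF hface x hx
        have hmg := hgen τ hτF hrayτ
        obtain ⟨t, ht0, hxt⟩ : ∃ t : ℝ, 0 ≤ t ∧ x = t • gen τ := by
          have h := hmg.2.1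
          rw [h] at hx
          exact hx
        have h3 : (m τ - m' τ) x = 0 := by
          rw [hxt, map_smul, smul_eq_mul]
          have hg : m τ (gen τ) = m' τ (gen τ) := by
            have := hval ρ
            rwa [hρ] at this
          rw [LinearMap.sub_apply, hg, sub_self, mul_zero]
        have hsplit : (m σ - m' σ) x
            = (m σ - m τ) x + ((m τ - m' τ) x - ((m' σ - m' τ) x)) := by
          simp only [LinearMap.sub_apply]
          ring
        rw [hsplit, h1, h2, h3]
        ring
      ext u
      simp only [Set.mem_image]
      constructor
      · rintro ⟨w, hw, rfl⟩
        refine ⟨(m σ - m' σ) + w, ?_, ?_⟩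
        · intro x hx
          simp only [LinearMap.add_apply]
          rw [hd x hx, zero_add]
          exact hw x hx
        · abel
      · rintro ⟨w, hw, rfl⟩
        refine ⟨(m' σ - m σ) + w, ?_, ?_⟩
        · intro x hx
          simp only [LinearMap.add_apply, LinearMap.sub_apply]
          have := hd x hx
          rw [LinearMap.sub_apply] at this
          have hwx := hw x hx
          linarith
        · abel
end
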